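/- Let \(\mathfrak{g}\) be a finite-dimensional Lie algebra over a field of characteristic zero, \(H, Z\) commuting rational semisimple elements, \(H_t = H + tZ\) and \(\mathfrak{v}_t = \mathfrak{g}^{H_t}_{>1}\), \(\mathfrak{w}_t = \mathfrak{g}^{H_t}_1\). Suppose \(0 \leq s < t\) and every \(r \in (s,t)\) is regular (meaning \(\mathfrak{g}^{H_r}_1 \subseteq \mathfrak{g}^Z_0\)). Then \(\mathfrak{v}_t \oplus (\mathfrak{w}_t \cap \mathfrak{g}^Z_{<0}) = \mathfrak{v}_s \oplus (\mathfrak{w}_s \cap \mathfrak{g}^Z_{>0})\). -/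

import Mathlib

open Module

namespace DefIdAux

variable {K L : Type*} [Field K] [CharZero K] [LieRing L] [LieAlgebra K L]
  [FiniteDimensional K L]

lemma eigen_le_maxGen (f : Module.End K L) (μ : K) :
    f.eigenspace μ ≤ f.maxGenEigenspace μ :=
  (f.genEigenspace μ).monotone le_top

lemma maxGen_eq_eigen_of_rat (f : Module.End K L)
    (hf : ⨆ q : ℚ, f.eigenspace (q : K) = ⊤) (q : ℚ) :
    f.maxGenEigenspace (q : K) = f.eigenspace (q : K) := by
  classical
  have hd : Disjoint (f.maxGenEigenspace (q : K))
      (⨆ ν ∈ {ν : K | ν ≠ (q : K)}, f.maxGenEigenspace ν) :=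
    f.independent_maxGenEigenspace.disjoint_biSup (by simp)
  have htop : f.eigenspace (q : K) ⊔
      (⨆ ν ∈ {ν : K | ν ≠ (q : K)}, f.maxGenEigenspace ν) = ⊤ := by
    rw [eq_top_iff, ← hf]
    refine iSup_le fun p => ?_
    rcases eq_or_ne ((p : K)) ((q : K)) with h | h
    · rw [h]; exact le_sup_left
    · exact le_trans (le_trans (eigen_le_maxGen f _) (le_biSup _ h)) le_sup_right
  calc f.maxGenEigenspace (q : K)
      = (f.eigenspace (q : K) ⊔ (⨆ ν ∈ {ν : K | ν ≠ (q : K)}, f.maxGenEigenspace ν)) ⊓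
        f.maxGenEigenspace (q : K) := by rw [htop, top_inf_eq]
    _ = f.eigenspace (q : K) ⊔
        ((⨆ ν ∈ {ν : K | ν ≠ (q : K)}, f.maxGenEigenspace ν) ⊓ f.maxGenEigenspace (q : K)) :=
        sup_inf_assoc_of_le _ (eigen_le_maxGen f _)
    _ = f.eigenspace (q : K) := by rw [(hd.symm).eq_bot, sup_bot_eq]

lemma maxGen_eq_bot_of_irrat (f : Module.End K L)
    (hf : ⨆ q : ℚ, f.eigenspace (q : K) = ⊤) {μ : K} (hμ : ∀ q : ℚ, (q : K) ≠ μ) :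
    f.maxGenEigenspace μ = ⊥ := by
  have hd : Disjoint (f.maxGenEigenspace μ)
      (⨆ ν ∈ {ν : K | ν ≠ μ}, f.maxGenEigenspace ν) :=
    f.independent_maxGenEigenspace.disjoint_biSup (by simp)
  have htop : (⨆ ν ∈ {ν : K | ν ≠ μ}, f.maxGenEigenspace ν) = ⊤ := by
    rw [eq_top_iff, ← hf]
    exact iSup_le fun p => le_trans (eigen_le_maxGen f _) (le_biSup _ (hμ p))
  rw [htop, disjoint_top] at hd
  exact hd

lemma eigenspace_eq_biSup_of_family {ι : Type*} (F : ι → Submodule K L)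
    (hFtop : ⨆ p, F p = ⊤) (g : Module.End K L) (w : ι → ℚ)
    (hw : ∀ p, F p ≤ g.eigenspace (w p : K)) (μ : ℚ) :
    g.eigenspace (μ : K) = ⨆ p, ⨆ _ : w p = μ, F p := by
  classical
  refine le_antisymm ?_ (iSup₂_le fun p hp => hp ▸ hw p)
  intro x hx
  obtain ⟨c, hc, hsum⟩ := (Submodule.mem_iSup_iff_exists_finsupp F x).mp
    (hFtop ▸ Submodule.mem_top)
  have hsum' : ∑ p ∈ c.support, c p = x := hsum
  set u := ∑ p ∈ c.support.filter (fun p => w p = μ), c p with hu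
  have hum : u ∈ ⨆ p, ⨆ _ : w p = μ, F p :=
    Submodule.sum_mem _ fun p hp => by
      obtain ⟨-, h2⟩ := Finset.mem_filter.mp hp
      exact Submodule.mem_iSup_of_mem p (Submodule.mem_iSup_of_mem h2 (hc p))
  have hueig : u ∈ g.eigenspace (μ : K) :=
    Submodule.sum_mem _ fun p hp => by
      obtain ⟨-, h2⟩ := Finset.mem_filter.mp hp
      exact h2 ▸ hw p (hc p)
  have hv : x - u ∈ g.eigenspace (μ : K) := sub_mem hx hueig
  have hv' : x - u ∈ ⨆ ν ∈ {ν : K | ν ≠ (μ : K)}, g.eigenspace ν := by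
    have hsplit := Finset.sum_filter_add_sum_filter_not c.support (fun p => w p = μ) (fun p => c p)
    have hxu : x - u = ∑ p ∈ c.support.filter (fun p => ¬ w p = μ), c p := by
      rw [← hsum', ← hsplit, hu, add_sub_cancel_left]
    rw [hxu]
    refine Submodule.sum_mem _ fun p hp => ?_
    obtain ⟨-, h2⟩ := Finset.mem_filter.mp hp
    refine Submodule.mem_iSup_of_mem ((w p : ℚ) : K) (Submodule.mem_iSup_of_mem ?_ (hw p (hc p)))
    exact fun h => h2 (by exact_mod_cast h)
  have hdz : x - u = 0 := by
    have hd : Disjoint (g.eigenspace (μ : K)) (⨆ ν ∈ {ν : K | ν ≠ (μ : K)}, g.eigenspace ν) :=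
      g.eigenspaces_iSupIndep.disjoint_biSup (by simp)
    exact (Submodule.mem_bot K).mp (hd.le_bot ⟨hv, hv'⟩)
  have hxeq : x = u := by rw [← sub_eq_zero]; exact hdz
  rw [hxeq]; exact hum

lemma biSup_inf_biSup_le {ι : Type*} {F : ι → Submodule K L} (h : iSupIndep F)
    (A B : ι → Prop) :
    (⨆ p, ⨆ _ : A p, F p) ⊓ (⨆ p, ⨆ _ : B p, F p) ≤ ⨆ p, ⨆ _ : A p ∧ B p, F p := by
  classical
  intro x hx
  obtain ⟨hxA, hxB⟩ := Submodule.mem_inf.mp hx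
  rw [Submodule.mem_biSup_iff_exists_dfinsupp] at hxA hxB
  obtain ⟨f, hf⟩ := hxA
  obtain ⟨g, hg⟩ := hxB
  have key : f.filter A = g.filter B := h.dfinsupp_lsum_injective (hf.trans hg.symm)
  refine (Submodule.mem_biSup_iff_exists_dfinsupp (fun p => A p ∧ B p) F x).mpr
    ⟨f.filter A, ?_⟩
  have h1 : (f.filter A).filter (fun p => A p ∧ B p) = f.filter A := by
    ext i
    simp only [DFinsupp.filter_apply]
    by_cases hA : A i
    · by_cases hB : B i
      · simp [hA, hB]
      · have := DFunLike.congr_fun key i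
        simp only [DFinsupp.filter_apply, hA, hB, if_true, if_false] at this
        simp [hA, hB, this]
    · simp [hA]
  rw [h1]
  exact hf

end DefIdAux


/-- The `q`-eigenspace of `ad S`, for a rational number `q` (cast into `K`). -/
noncomputable def adE (K : Type*) {L : Type*} [Field K] [LieRing L] [LieAlgebra K L]
    (S : L) (q : ℚ) : Submodule K L :=
  Module.End.eigenspace (LieAlgebra.ad K L S) (q : K)

/-- `𝔤^S_{≥ c}`: the sum of eigenspaces of `ad S` with (rational) eigenvalue `≥ c`. -/
noncomputable def gge (K : Type*) {L : Type*} [Field K] [LieRing L] [LieAlgebra K L]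
    (S : L) (c : ℚ) : Submodule K L :=
  ⨆ q : ℚ, ⨆ _ : c ≤ q, adE K S q

/-- `𝔤^S_{> c}`: the sum of eigenspaces of `ad S` with (rational) eigenvalue `> c`. -/
noncomputable def ggt (K : Type*) {L : Type*} [Field K] [LieRing L] [LieAlgebra K L]
    (S : L) (c : ℚ) : Submodule K L :=
  ⨆ q : ℚ, ⨆ _ : c < q, adE K S q

/-- `𝔤^S_{≤ c}`: the sum of eigenspaces of `ad S` with (rational) eigenvalue `≤ c`. -/
noncomputable def gle (K : Type*) {L : Type*} [Field K] [LieRing L] [LieAlgebra K L]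
    (S : L) (c : ℚ) : Submodule K L :=
  ⨆ q : ℚ, ⨆ _ : q ≤ c, adE K S q

/-- `𝔤^S_{< c}`: the sum of eigenspaces of `ad S` with (rational) eigenvalue `< c`. -/
noncomputable def glt (K : Type*) {L : Type*} [Field K] [LieRing L] [LieAlgebra K L]
    (S : L) (c : ℚ) : Submodule K L :=
  ⨆ q : ℚ, ⨆ _ : q < c, adE K S q

/-- `S` is rational semisimple: `ad S` is diagonalizable with rational eigenvalues. -/
def IsRatSS (K : Type*) {L : Type*} [Field K] [LieRing L] [LieAlgebra K L] (S : L) : Prop :=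
  (⨆ q : ℚ, adE K S q) = ⊤

/-- The stabilizer `𝔤_φ` of `φ` under the coadjoint action:
all `X` with `φ ∘ ad X = 0`, i.e. `φ ⁅X, Y⁆ = 0` for all `Y`. -/
def coStab (K : Type*) {L : Type*} [Field K] [LieRing L] [LieAlgebra K L]
    (φ : Module.Dual K L) : Submodule K L where
  carrier := {X | ∀ Y : L, φ ⁅X, Y⁆ = 0}
  add_mem' := by intro a b ha hb; intro Y; simp [add_lie, ha Y, hb Y]
  zero_mem' := by intro Y; simp
  smul_mem' := by intro c x hx; intro Y; simp [smul_lie, hx Y]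

/-- `𝔫_{S,φ} = ker (ω_φ|_{𝔤^S_{≥1}})`, the radical of the form `ω_φ(X,Y) = φ ⁅X,Y⁆`
restricted to `𝔲 = 𝔤^S_{≥1}` (note `φ ⁅Y, X⁆ = 0` for all `Y ∈ 𝔲` iff
`φ ⁅X, Y⁆ = 0` for all `Y ∈ 𝔲`, by antisymmetry of the bracket). -/
noncomputable def nSub (K : Type*) {L : Type*} [Field K] [LieRing L] [LieAlgebra K L]
    (S : L) (φ : Module.Dual K L) : Submodule K L :=
  gge K S 1 ⊓ ⨅ Y : (gge K S 1 : Submodule K L),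
    LinearMap.ker (φ ∘ₗ LieAlgebra.ad K L (Y : L))

/-- Let `H, Z` be commuting rational semisimple elements, `H_t = H + tZ`,
`𝔳_t = 𝔤^{H_t}_{>1}`, `𝔴_t = 𝔤^{H_t}_1`.  If `0 ≤ s < t` and every `r ∈ (s,t)` is
regular (i.e. `𝔤^{H_r}_1 ⊆ 𝔤^Z_0`), then
`𝔳_t ⊕ (𝔴_t ∩ 𝔤^Z_{<0}) = 𝔳_s ⊕ (𝔴_s ∩ 𝔤^Z_{>0})`. -/
theorem deformation_subspace_identity
    {K L : Type*} [Field K] [CharZero K] [LieRing L] [LieAlgebra K L]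
    [FiniteDimensional K L]
    (H Z : L) (hcomm : ⁅H, Z⁆ = 0) (hH : IsRatSS K H) (hZ : IsRatSS K Z)
    (s t : ℚ) (hs : 0 ≤ s) (hst : s < t)
    (hreg : ∀ r : ℚ, s < r → r < t → adE K (H + (r : K) • Z) 1 ≤ adE K Z 0) :
    ggt K (H + (t : K) • Z) 1 ⊔ (adE K (H + (t : K) • Z) 1 ⊓ glt K Z 0) =
      ggt K (H + (s : K) • Z) 1 ⊔ (adE K (H + (s : K) • Z) 1 ⊓ ggt K Z 0) := by
  classical
  open DefIdAux in
  -- abbreviations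
  have hH' : ⨆ q : ℚ, (LieAlgebra.ad K L H).eigenspace (q : K) = ⊤ := hH
  have hZ' : ⨆ q : ℚ, (LieAlgebra.ad K L Z).eigenspace (q : K) = ⊤ := hZ
  -- the two adjoint operators commute
  have hcom : Commute (LieAlgebra.ad K L H) (LieAlgebra.ad K L Z) := by
    show _ * _ = _ * _
    refine LinearMap.ext fun x => ?_
    simp only [Module.End.mul_apply, LieAlgebra.ad_apply]
    rw [leibniz_lie, hcomm, zero_lie, zero_add]
  -- the joint eigenspace family
  set F : ℚ × ℚ → Submodule K L := fun p => adE K H p.1 ⊓ adE K Z p.2 with hFdef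
  set f : Bool → Module.End K L :=
    fun i => if i then LieAlgebra.ad K L H else LieAlgebra.ad K L Z with hfdef
  have hpair : Pairwise fun i j => Commute (f i) (f j) := by
    intro i j hij
    cases i <;> cases j <;> simp [hfdef] at hij ⊢
    · exact hcom.symm
    · exact hcom
  have hdiag : ∀ i, ⨆ μ, (f i).maxGenEigenspace μ = ⊤ := by
    intro i
    rw [eq_top_iff]
    cases i
    · rw [← hZ']
      exact iSup_le fun q =>
        le_trans (DefIdAux.eigen_le_maxGen _ _) (by simp [hfdef]; exact le_iSup _ ((q : K)))
    · rw [← hH']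
      exact iSup_le fun q =>
        le_trans (DefIdAux.eigen_le_maxGen _ _) (by simp [hfdef]; exact le_iSup _ ((q : K)))
  have htopχ : ⨆ χ : Bool → K, ⨅ i, (f i).maxGenEigenspace (χ i) = ⊤ :=
    Module.End.iSup_iInf_maxGenEigenspace_eq_top_of_iSup_maxGenEigenspace_eq_top_of_commute
      f hpair hdiag
  -- spanning property of the joint family
  have hFtop : ⨆ p, F p = ⊤ := by
    rw [eq_top_iff, ← htopχ]
    refine iSup_le fun χ => ?_
    by_cases h1 : ∃ a : ℚ, (a : K) = χ true
    · by_cases h2 : ∃ b : ℚ, (b : K) = χ false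
      · obtain ⟨a, ha⟩ := h1
        obtain ⟨b, hb⟩ := h2
        refine le_trans (le_inf (iInf_le _ true) (iInf_le _ false)) ?_
        refine le_trans ?_ (le_iSup F (a, b))
        rw [hFdef]
        simp only [hfdef, if_true, if_false, Bool.false_eq_true]
        rw [← ha, ← hb, DefIdAux.maxGen_eq_eigen_of_rat _ hH' a,
          DefIdAux.maxGen_eq_eigen_of_rat _ hZ' b]
        exact le_rfl
      · push_neg at h2
        refine le_trans (iInf_le _ false) ?_
        have : (f false).maxGenEigenspace (χ false) = ⊥ := by
          simp only [hfdef, if_false, Bool.false_eq_true]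
          exact DefIdAux.maxGen_eq_bot_of_irrat _ hZ' h2
        rw [this]
        exact bot_le
    · push_neg at h1
      refine le_trans (iInf_le _ true) ?_
      have : (f true).maxGenEigenspace (χ true) = ⊥ := by
        simp only [hfdef, if_true]
        exact DefIdAux.maxGen_eq_bot_of_irrat _ hH' h1
      rw [this]
      exact bot_le
  -- independence of the joint family
  have hFind : iSupIndep F := by
    have hindχ : iSupIndep fun χ : Bool → K => ⨅ i, (f i).maxGenEigenspace (χ i) := by
      refine Module.End.independent_iInf_maxGenEigenspace_of_forall_mapsTo f ?_
      intro i j φ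
      refine Module.End.mapsTo_maxGenEigenspace_of_comm ?_ φ
      rcases eq_or_ne i j with rfl | hij
      · rfl
      · exact hpair hij.symm
    have he : Function.Injective
        (fun p : ℚ × ℚ => (fun i : Bool => if i then ((p.1 : K)) else ((p.2 : K)))) := by
      intro p q h
      have h1 := congrFun h true
      have h2 := congrFun h false
      simp only [if_true, if_false, Bool.false_eq_true] at h1 h2
      exact Prod.ext (by exact_mod_cast h1) (by exact_mod_cast h2)
    refine (hindχ.comp he).mono ?_
    intro p
    refine le_iInf fun i => ?_
    cases i
    · simp only [Function.comp_apply, hfdef, if_false, Bool.false_eq_true]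
      exact le_trans inf_le_right (DefIdAux.eigen_le_maxGen _ _)
    · simp only [Function.comp_apply, hfdef, if_true]
      exact le_trans inf_le_left (DefIdAux.eigen_le_maxGen _ _)
  -- each joint eigenspace lands in an eigenspace of `ad (H + c Z)`
  have hwc : ∀ (c : ℚ) (p : ℚ × ℚ),
      F p ≤ (LieAlgebra.ad K L (H + (c : K) • Z)).eigenspace ((p.1 + c * p.2 : ℚ) : K) := by
    rintro c ⟨a, b⟩ x hx
    obtain ⟨h1', h2'⟩ := Submodule.mem_inf.mp hx
    have h1 : x ∈ (LieAlgebra.ad K L H).eigenspace ((a : K)) := h1'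
    have h2 : x ∈ (LieAlgebra.ad K L Z).eigenspace ((b : K)) := h2'
    rw [Module.End.mem_eigenspace_iff] at h1 h2 ⊢
    rw [LieAlgebra.ad_apply] at h1 h2 ⊢
    rw [add_lie, smul_lie, h1, h2, smul_smul, ← add_smul]
    congr 1
    push_cast
    ring
  have claimA : ∀ (c μ : ℚ),
      adE K (H + (c : K) • Z) μ = ⨆ p : ℚ × ℚ, ⨆ _ : p.1 + c * p.2 = μ, F p := by
    intro c μ
    exact DefIdAux.eigenspace_eq_biSup_of_family F hFtop _ (fun p => p.1 + c * p.2) (hwc c) μ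
  have claimZ : ∀ b : ℚ, adE K Z b = ⨆ p : ℚ × ℚ, ⨆ _ : p.2 = b, F p := by
    intro b
    exact DefIdAux.eigenspace_eq_biSup_of_family F hFtop _ (fun p => p.2)
      (fun p => inf_le_right) b
  have claimB : ∀ c : ℚ,
      ggt K (H + (c : K) • Z) 1 = ⨆ p : ℚ × ℚ, ⨆ _ : 1 < p.1 + c * p.2, F p := by
    intro c
    refine le_antisymm (iSup₂_le fun q hq => ?_) (iSup₂_le fun p hp => ?_)
    · rw [claimA c q]
      exact iSup₂_le fun p hp => le_iSup₂_of_le p (by rw [hp]; exact hq) le_rfl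
    · exact le_iSup₂_of_le (p.1 + c * p.2) hp (hwc c p)
  have claimGlt : glt K Z 0 = ⨆ p : ℚ × ℚ, ⨆ _ : p.2 < 0, F p := by
    refine le_antisymm (iSup₂_le fun q hq => ?_) (iSup₂_le fun p hp => ?_)
    · rw [claimZ q]
      exact iSup₂_le fun p hp => le_iSup₂_of_le p (by rw [hp]; exact hq) le_rfl
    · exact le_iSup₂_of_le p.2 hp inf_le_right
  have claimGgt : ggt K Z 0 = ⨆ p : ℚ × ℚ, ⨆ _ : 0 < p.2, F p := by
    refine le_antisymm (iSup₂_le fun q hq => ?_) (iSup₂_le fun p hp => ?_)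
    · rw [claimZ q]
      exact iSup₂_le fun p hp => le_iSup₂_of_le p (by rw [hp]; exact hq) le_rfl
    · exact le_iSup₂_of_le p.2 hp inf_le_right
  have claimC : adE K (H + (t : K) • Z) 1 ⊓ glt K Z 0 =
      ⨆ p : ℚ × ℚ, ⨆ _ : p.1 + t * p.2 = 1 ∧ p.2 < 0, F p := by
    rw [claimA t 1, claimGlt]
    refine le_antisymm (DefIdAux.biSup_inf_biSup_le hFind _ _) (le_inf ?_ ?_)
    · exact iSup₂_le fun p hp => le_iSup₂_of_le p hp.1 le_rfl
    · exact iSup₂_le fun p hp => le_iSup₂_of_le p hp.2 le_rfl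
  have claimD : adE K (H + (s : K) • Z) 1 ⊓ ggt K Z 0 =
      ⨆ p : ℚ × ℚ, ⨆ _ : p.1 + s * p.2 = 1 ∧ 0 < p.2, F p := by
    rw [claimA s 1, claimGgt]
    refine le_antisymm (DefIdAux.biSup_inf_biSup_le hFind _ _) (le_inf ?_ ?_)
    · exact iSup₂_le fun p hp => le_iSup₂_of_le p hp.1 le_rfl
    · exact iSup₂_le fun p hp => le_iSup₂_of_le p hp.2 le_rfl
  -- vanishing of joint eigenspaces crossing the wall
  have hbot : ∀ p : ℚ × ℚ, p.2 ≠ 0 → s < (1 - p.1) / p.2 → (1 - p.1) / p.2 < t →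
      F p = ⊥ := by
    rintro ⟨a, b⟩ hb h1 h2
    set r : ℚ := (1 - a) / b with hrdef
    have hr : a + r * b = 1 := by
      rw [hrdef]
      field_simp
      ring
    have hF1 : F (a, b) ≤ adE K (H + (r : K) • Z) 1 := by
      have h := hwc r (a, b)
      simp only at h
      rw [hr] at h
      exact h
    have hF0 : F (a, b) ≤ adE K Z 0 := le_trans hF1 (hreg r h1 h2)
    rw [eq_bot_iff]
    intro x hx
    have hd : Disjoint (adE K Z 0) (adE K Z b) := by
      refine Module.End.disjoint_genEigenspace _ ?_ 1 1
      exact_mod_cast Ne.symm hb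
    exact hd.le_bot ⟨hF0 hx, (inf_le_right : F (a, b) ≤ adE K Z b) hx⟩
  -- arithmetic key lemmas
  have hkey_t : ∀ p : ℚ × ℚ, (1 < p.1 + t * p.2 ∨ (p.1 + t * p.2 = 1 ∧ p.2 < 0)) →
      F p ≤ (⨆ p : ℚ × ℚ, ⨆ _ : 1 < p.1 + s * p.2, F p) ⊔
        (⨆ p : ℚ × ℚ, ⨆ _ : p.1 + s * p.2 = 1 ∧ 0 < p.2, F p) := by
    rintro ⟨a, b⟩ hp
    simp only at hp ⊢
    rcases lt_trichotomy b 0 with hb | hb | hb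
    · have h1 : 1 ≤ a + t * b := by
        rcases hp with h | h
        · linarith
        · linarith [h.1.ge]
      have h2 : 1 < a + s * b := by nlinarith
      exact le_trans (le_iSup₂_of_le (a, b) h2 le_rfl) le_sup_left
    · subst hb
      have h2 : 1 < a + s * 0 := by
        rcases hp with h | h
        · rw [mul_zero] at h ⊢; exact h
        · exact absurd h.2 (lt_irrefl 0)
      exact le_trans (le_iSup₂_of_le (a, 0) h2 le_rfl) le_sup_left
    · by_cases hs1 : 1 < a + s * b
      · exact le_trans (le_iSup₂_of_le (a, b) hs1 le_rfl) le_sup_left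
      · by_cases hs2 : a + s * b = 1
        · exact le_trans (le_iSup₂_of_le (a, b) ⟨hs2, hb⟩ le_rfl) le_sup_right
        · have hlt : a + s * b < 1 := lt_of_le_of_ne (not_lt.mp hs1) hs2
          have ht1 : 1 < a + t * b := by
            rcases hp with h | h
            · exact h
            · exact absurd h.2 (not_lt.mpr hb.le)
          have hsr : s < (1 - a) / b := by
            rw [lt_div_iff₀ hb]
            linarith
          have hrt : (1 - a) / b < t := by
            rw [div_lt_iff₀ hb]
            linarith
          rw [hbot (a, b) hb.ne' hsr hrt]
          exact bot_le
  have hkey_s : ∀ p : ℚ × ℚ, (1 < p.1 + s * p.2 ∨ (p.1 + s * p.2 = 1 ∧ 0 < p.2)) →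
      F p ≤ (⨆ p : ℚ × ℚ, ⨆ _ : 1 < p.1 + t * p.2, F p) ⊔
        (⨆ p : ℚ × ℚ, ⨆ _ : p.1 + t * p.2 = 1 ∧ p.2 < 0, F p) := by
    rintro ⟨a, b⟩ hp
    simp only at hp ⊢
    rcases lt_trichotomy b 0 with hb | hb | hb
    · have h1 : 1 < a + s * b := by
        rcases hp with h | h
        · exact h
        · exact absurd h.2 (not_lt.mpr hb.le)
      by_cases ht1 : 1 < a + t * b
      · exact le_trans (le_iSup₂_of_le (a, b) ht1 le_rfl) le_sup_left
      · by_cases ht2 : a + t * b = 1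
        · exact le_trans (le_iSup₂_of_le (a, b) ⟨ht2, hb⟩ le_rfl) le_sup_right
        · have hlt : a + t * b < 1 := lt_of_le_of_ne (not_lt.mp ht1) ht2
          have hsr : s < (1 - a) / b := by
            rw [lt_div_iff_of_neg hb]
            linarith
          have hrt : (1 - a) / b < t := by
            rw [div_lt_iff_of_neg hb]
            linarith
          rw [hbot (a, b) hb.ne hsr hrt]
          exact bot_le
    · subst hb
      have h2 : 1 < a + t * 0 := by
        rcases hp with h | h
        · rw [mul_zero] at h ⊢; exact h
        · exact absurd h.2 (lt_irrefl 0)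
      exact le_trans (le_iSup₂_of_le (a, 0) h2 le_rfl) le_sup_left
    · have h1 : 1 ≤ a + s * b := by
        rcases hp with h | h
        · linarith
        · linarith [h.1.ge]
      have h2 : 1 < a + t * b := by nlinarith
      exact le_trans (le_iSup₂_of_le (a, b) h2 le_rfl) le_sup_left
  -- assemble
  rw [claimB t, claimB s, claimC, claimD]
  refine le_antisymm (sup_le ?_ ?_) (sup_le ?_ ?_)
  · exact iSup₂_le fun p hp => hkey_t p (Or.inl hp)
  · exact iSup₂_le fun p hp => hkey_t p (Or.inr hp)
  · exact iSup₂_le fun p hp => hkey_s p (Or.inl hp)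
  · exact iSup₂_le fun p hp => hkey_s p (Or.inr hp)
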